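/- For every c > 0, the ratio Φ(x − c)/Φ(x) tends to 0 as x → −∞. -/

import Mathlib

open MeasureTheory ProbabilityTheory Real Filter Set

/-- Cumulative distribution function of the standard normal distribution. -/
noncomputable def stdNormalCDF : ℝ → ℝ :=
  fun x => ProbabilityTheory.cdf (ProbabilityTheory.gaussianReal 0 1) x

lemma stdNormalCDF_eq (x : ℝ) :
    stdNormalCDF x = ∫ t in Set.Iic x, gaussianPDFReal 0 1 t := by
  rw [stdNormalCDF, cdf_eq_real, measureReal_def, gaussianReal_apply_eq_integral 0 one_ne_zero,
    ENNReal.toReal_ofReal (integral_nonneg fun t => gaussianPDFReal_nonneg 0 1 t)]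

lemma stdNormalCDF_shift_eq (c x : ℝ) :
    stdNormalCDF (x - c) = ∫ t in Set.Iic x, gaussianPDFReal c 1 t := by
  have hmap : (gaussianReal 0 1).map (· + c) = gaussianReal c 1 := by
    simpa using gaussianReal_map_add_const (μ := 0) (v := 1) c
  have h1 : (gaussianReal 0 1) (Set.Iic (x - c)) = (gaussianReal c 1) (Set.Iic x) := by
    rw [← hmap, Measure.map_apply (by fun_prop) measurableSet_Iic]
    congr 1
    ext t
    simp [le_sub_iff_add_le]
  rw [stdNormalCDF, cdf_eq_real, measureReal_def, h1, gaussianReal_apply_eq_integral c one_ne_zero,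
    ENNReal.toReal_ofReal (integral_nonneg fun t => gaussianPDFReal_nonneg c 1 t)]

lemma stdNormalCDF_pos (x : ℝ) : 0 < stdNormalCDF x := by
  rw [stdNormalCDF_eq]
  rw [setIntegral_pos_iff_support_of_nonneg_ae
    (ae_of_all _ fun t => gaussianPDFReal_nonneg 0 1 t)
    ((integrable_gaussianPDFReal 0 1).integrableOn)]
  have hs : Function.support (gaussianPDFReal 0 1) = Set.univ := by
    ext t
    simp [Function.mem_support, (gaussianPDFReal_pos 0 1 t one_ne_zero).ne']
  rw [hs, Set.univ_inter]
  simp [Real.volume_Iic]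

lemma stdNormalCDF_shift_le (c : ℝ) (hc : 0 < c) (x : ℝ) :
    stdNormalCDF (x - c) ≤ Real.exp (c * x - c ^ 2 / 2) * stdNormalCDF x := by
  rw [stdNormalCDF_shift_eq, stdNormalCDF_eq, ← integral_const_mul]
  refine setIntegral_mono_on ((integrable_gaussianPDFReal c 1).integrableOn)
    (((integrable_gaussianPDFReal 0 1).const_mul _).integrableOn) measurableSet_Iic ?_
  intro t ht
  simp only [Set.mem_Iic] at ht
  simp only [gaussianPDFReal, NNReal.coe_one, mul_one]
  rw [mul_left_comm]
  refine mul_le_mul_of_nonneg_left ?_ (by positivity)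
  rw [← Real.exp_add, Real.exp_le_exp]
  have := mul_le_mul_of_nonneg_left ht hc.le
  nlinarith

/-- Gaussian left-tail ratio asymptotics: for every `c > 0`,
`Φ(x - c)/Φ(x) → 0` as `x → -∞`. -/
theorem gaussian_left_tail_ratio_tendsto_zero (c : ℝ) (hc : 0 < c) :
    Filter.Tendsto (fun x => stdNormalCDF (x - c) / stdNormalCDF x)
      Filter.atBot (nhds 0) := by
  have hexp : Filter.Tendsto (fun x => Real.exp (c * x - c ^ 2 / 2)) Filter.atBot (nhds 0) := by
    apply Real.tendsto_exp_atBot.comp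
    apply Filter.tendsto_atBot_add_const_right
    exact (tendsto_const_mul_atBot_of_pos hc).mpr tendsto_id
  refine tendsto_of_tendsto_of_tendsto_of_le_of_le tendsto_const_nhds hexp ?_ ?_
  · intro x
    exact div_nonneg (stdNormalCDF_pos _).le (stdNormalCDF_pos _).le
  · intro x
    rw [div_le_iff₀ (stdNormalCDF_pos x)]
    exact stdNormalCDF_shift_le c hc x
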